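/- Let q ≥ 5 be an odd integer and ε ∈ (0, 1/2], and let θ_q = q cos(π/q)/(1 + cos(π/q)) (the Lovász theta function of the q-cycle). Then for every rate R > log₂ θ_q, the reliability function of the typewriter channel satisfies E(R) ≤ log₂(1/ε). -/

import Mathlib

/-- The typewriter channel transition probabilities on `ZMod q`. -/
noncomputable def W (q : ℕ) (ε : ℝ) (y x : ZMod q) : ℝ :=
  if y = x then 1 - ε else if y = x + 1 then ε else 0

/-- `α_ε = √(ε(1-ε))`. -/
noncomputable def alphaE (ε : ℝ) : ℝ := Real.sqrt (ε * (1 - ε))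

/-- The `n`-fold memoryless extension `Wⁿ(y|x) = ∏ₖ W(yₖ|xₖ)`. -/
noncomputable def Wn (q : ℕ) [NeZero q] (n : ℕ) (ε : ℝ) (y x : Fin n → ZMod q) : ℝ :=
  ∏ k, W q ε (y k) (x k)

/-- `Pe(M,n)`: the smallest average error probability over all encoders
`f : Fin M → (ZMod q)ⁿ` and decoders `φ : (ZMod q)ⁿ → Fin M`. -/
noncomputable def Pe (q : ℕ) [NeZero q] (ε : ℝ) (M n : ℕ) : ℝ :=
  sInf {p : ℝ | ∃ f : Fin M → (Fin n → ZMod q), ∃ φ : (Fin n → ZMod q) → Fin M,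
    p = (1 / M) * ∑ m : Fin M, ∑ y : Fin n → ZMod q,
      if φ y = m then 0 else Wn q n ε y (f m)}

/-- The reliability function
`E(R) = limsup_{n→∞} (1/n) log₂ (1 / Pe(⌈2^{nR}⌉, n))`. -/
noncomputable def EReliability (q : ℕ) [NeZero q] (ε : ℝ) (R : ℝ) : ℝ :=
  Filter.limsup (fun n : ℕ =>
    (1 / (n : ℝ)) * Real.logb 2 (1 / Pe q ε (⌈(2 : ℝ) ^ ((n : ℝ) * R)⌉₊) n))
    Filter.atTop

/-- Binary entropy function (base 2), extended by `log 0 = 0`. -/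
noncomputable def h2 (x : ℝ) : ℝ := -(x * Real.logb 2 x) - (1 - x) * Real.logb 2 (1 - x)


set_option linter.unusedSectionVars false
set_option maxHeartbeats 1000000


open Complex Finset Real

section char
variable (q : ℕ) [NeZero q]

noncomputable def zetaQ : ℂ := Complex.exp (2 * Real.pi * Complex.I / q)

noncomputable def eQ (d : ZMod q) : ℂ := (zetaQ q) ^ d.val

lemma zetaQ_pow_q : (zetaQ q) ^ q = 1 := by
  rw [zetaQ, ← Complex.exp_nat_mul]
  have hq : (q : ℂ) ≠ 0 := Nat.cast_ne_zero.2 (NeZero.ne q)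
  rw [show (q : ℂ) * (2 * Real.pi * Complex.I / q) = 2 * Real.pi * Complex.I by field_simp]
  exact Complex.exp_two_pi_mul_I

lemma eQ_zero : eQ q 0 = 1 := by
  simp [eQ, ZMod.val_zero]

lemma eQ_add (a b : ZMod q) : eQ q (a + b) = eQ q a * eQ q b := by
  rw [eQ, eQ, eQ, ← pow_add, ZMod.val_add]
  conv_rhs => rw [← Nat.mod_add_div (a.val + b.val) q]
  rw [pow_add, pow_mul, zetaQ_pow_q, one_pow, mul_one]

lemma eQ_nsmul (a : ZMod q) (n : ℕ) : eQ q (n • a) = eQ q a ^ n := by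
  induction n with
  | zero => simp [eQ_zero]
  | succ n ih => rw [succ_nsmul, eQ_add, ih, pow_succ]

lemma eQ_ne_one (d : ZMod q) (hd : d ≠ 0) : eQ q d ≠ 1 := by
  have hprim : IsPrimitiveRoot (zetaQ q) q := Complex.isPrimitiveRoot_exp q (NeZero.ne q)
  have h1 : 0 < d.val := by
    rcases Nat.eq_zero_or_pos d.val with h | h
    · exact absurd ((ZMod.val_eq_zero d).mp h) hd
    · exact h
  exact hprim.pow_ne_one_of_pos_of_lt h1.ne' (ZMod.val_lt d)

lemma eQ_mul_eQ_neg (a : ZMod q) : eQ q a * eQ q (-a) = 1 := by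
  rw [← eQ_add]; simp [eQ_zero]

lemma eQ_neg (a : ZMod q) : eQ q (-a) = starRingEnd ℂ (eQ q a) := by
  have habs : ‖eQ q a‖ = 1 := by
    rw [eQ, norm_pow, zetaQ, Complex.norm_exp]
    have : (2 * Real.pi * Complex.I / q).re = 0 := by
      rw [show 2 * Real.pi * Complex.I / q = (2 * Real.pi / q : ℝ) * Complex.I by push_cast; ring]
      simp
    rw [this, Real.exp_zero, one_pow]
  rw [← Complex.inv_eq_conj habs]
  have h0 : eQ q a ≠ 0 := by
    intro h0
    have := eQ_mul_eQ_neg q a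
    rw [h0, zero_mul] at this
    exact zero_ne_one this
  field_simp
  rw [mul_comm]; exact eQ_mul_eQ_neg q a

lemma sum_eQ_ne (d : ZMod q) (hd : d ≠ 0) : ∑ j : ZMod q, eQ q (j * d) = 0 := by
  have key : (∑ j : ZMod q, eQ q (j * d)) * eQ q d = ∑ j : ZMod q, eQ q (j * d) := by
    rw [Finset.sum_mul]
    have h1 : ∀ j : ZMod q, eQ q (j * d) * eQ q d = eQ q ((j + 1) * d) := by
      intro j; rw [← eQ_add]; ring_nf
    simp_rw [h1]
    exact Fintype.sum_equiv (Equiv.addRight (1 : ZMod q)) _ _ (fun j => rfl)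
  have h2 : (∑ j : ZMod q, eQ q (j * d)) * (eQ q d - 1) = 0 := by
    rw [mul_sub, key, mul_one, sub_self]
  rcases mul_eq_zero.mp h2 with h | h
  · exact h
  · exact absurd (sub_eq_zero.mp h) (eQ_ne_one q d hd)

lemma sum_eQ (d : ZMod q) : ∑ j : ZMod q, eQ q (j * d) = if d = 0 then (q : ℂ) else 0 := by
  split_ifs with h
  · subst h; simp only [mul_zero, eQ_zero, Finset.sum_const, Finset.card_univ, ZMod.card,
      nsmul_eq_mul, mul_one]
  · exact sum_eQ_ne q d h

end char

noncomputable def thetaQ (q : ℕ) : ℝ :=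
  q * Real.cos (Real.pi / q) / (1 + Real.cos (Real.pi / q))

lemma qpos {q : ℕ} (hq : 5 ≤ q) : (0 : ℝ) < q := by
  have : (5 : ℝ) ≤ q := by exact_mod_cast hq
  linarith

lemma cos_piq_pos {q : ℕ} (hq : 5 ≤ q) : 0 < Real.cos (Real.pi / q) := by
  have hq0 : (0 : ℝ) < q := qpos hq
  apply Real.cos_pos_of_mem_Ioo
  constructor
  · have : 0 < Real.pi / q := by positivity
    linarith [Real.pi_pos]
  · have h2q : (2 : ℝ) < q := by
      have : (5 : ℝ) ≤ q := by exact_mod_cast hq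
      linarith
    calc Real.pi / q < Real.pi / 2 := by
          apply div_lt_div_of_pos_left Real.pi_pos (by norm_num) h2q
      _ = Real.pi / 2 := rfl

lemma thetaQ_pos {q : ℕ} (hq : 5 ≤ q) : 0 < thetaQ q := by
  have := cos_piq_pos hq
  have := qpos hq
  rw [thetaQ]
  positivity

lemma cos_ge_aux {q : ℕ} (hq : 5 ≤ q) (w : ℕ) (hw : 2 * w + 1 ≤ q) :
    -Real.cos (Real.pi / q) ≤ Real.cos (2 * Real.pi * w / q) := by
  have hq0 : (0 : ℝ) < q := qpos hq
  have hx : (0 : ℝ) ≤ 2 * Real.pi * w / q := by positivity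
  have hwr : (2 * w + 1 : ℝ) ≤ q := by exact_mod_cast hw
  have hxy : 2 * Real.pi * w / q ≤ Real.pi - Real.pi / q := by
    have := Real.pi_pos
    rw [div_le_iff₀ hq0, sub_mul, div_mul_cancel₀ _ (ne_of_gt hq0)]
    nlinarith
  have hy : Real.pi - Real.pi / q ≤ Real.pi := by
    have : 0 < Real.pi / q := by positivity
    linarith
  have := Real.cos_le_cos_of_nonneg_of_le_pi hx hy hxy
  rwa [Real.cos_pi_sub] at this

lemma cos_ge {q : ℕ} (hq : 5 ≤ q) (hqo : Odd q) (v : ℕ) (hv : v < q) :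
    -Real.cos (Real.pi / q) ≤ Real.cos (2 * Real.pi * v / q) := by
  rcases le_or_gt (2 * v + 1) q with h | h
  · exact cos_ge_aux hq v h
  · -- 2v ≥ q, and 2v ≠ q since q odd
    have h2v : q < 2 * v := by
      rcases Nat.lt_or_ge q (2 * v) with h' | h'
      · exact h'
      · exfalso
        have : q = 2 * v := by omega
        exact (Nat.not_even_iff_odd.mpr hqo) (this ▸ even_two_mul v)
    have hw : 2 * (q - v) + 1 ≤ q := by omega
    have hvq : v ≤ q := le_of_lt hv
    have hcast : ((q - v : ℕ) : ℝ) = (q : ℝ) - v := by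
      push_cast [Nat.cast_sub hvq]; ring
    have := cos_ge_aux hq (q - v) hw
    rw [hcast] at this
    have hq0 : (0 : ℝ) < q := qpos hq
    have harg : 2 * Real.pi * ((q:ℝ) - v) / q = 2 * Real.pi - 2 * Real.pi * v / q := by
      field_simp
    rwa [harg, Real.cos_two_pi_sub] at this

noncomputable def cF (q : ℕ) [NeZero q] (j : ZMod q) : ℝ :=
  thetaQ q / q * (1 + (eQ q j).re / Real.cos (Real.pi / q))

lemma eQ_re (q : ℕ) [NeZero q] (d : ZMod q) :
    (eQ q d).re = Real.cos (2 * Real.pi * d.val / q) := by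
  rw [eQ, zetaQ, ← Complex.exp_nat_mul]
  rw [show (d.val : ℂ) * (2 * Real.pi * Complex.I / q)
      = ((2 * Real.pi * d.val / q : ℝ) : ℂ) * Complex.I by push_cast; ring]
  exact Complex.exp_ofReal_mul_I_re _

lemma cF_nonneg {q : ℕ} [NeZero q] (hq : 5 ≤ q) (hqo : Odd q) (j : ZMod q) :
    0 ≤ cF q j := by
  have hc := cos_piq_pos hq
  have hθ := thetaQ_pos hq
  have hq0 := qpos hq
  have hb := cos_ge hq hqo j.val (ZMod.val_lt j)
  rw [cF, eQ_re]
  have h1 : 0 ≤ 1 + Real.cos (2 * Real.pi * j.val / q) / Real.cos (Real.pi / q) := by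
    have : 0 ≤ (Real.cos (Real.pi / q) + Real.cos (2 * Real.pi * j.val / q)) / Real.cos (Real.pi / q) :=
      div_nonneg (by linarith [hb]) (le_of_lt hc)
    rw [add_div] at this
    rw [div_self (ne_of_gt hc)] at this
    linarith
  positivity

lemma cF_zero {q : ℕ} [NeZero q] (hq : 5 ≤ q) : cF q 0 = 1 := by
  have hc := cos_piq_pos hq
  have hq0 := qpos hq
  rw [cF, eQ_zero, Complex.one_re, thetaQ]
  field_simp
  ring

noncomputable def GQ (q : ℕ) [NeZero q] (d : ZMod q) : ℂ :=
  ∑ j : ZMod q, (cF q j : ℂ) * eQ q (j * d)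

lemma one_ne_zero_zmod {q : ℕ} [NeZero q] (hq : 5 ≤ q) : (1 : ZMod q) ≠ 0 := by
  intro h
  have : ((1 : ℕ) : ZMod q) = 0 := by exact_mod_cast h
  rw [ZMod.natCast_eq_zero_iff] at this
  have := Nat.le_of_dvd one_pos this
  omega

lemma cF_term {q : ℕ} [NeZero q] (hq : 5 ≤ q) (j d : ZMod q) :
    (cF q j : ℂ) * eQ q (j * d)
      = (thetaQ q / q : ℝ) * eQ q (j * d)
        + (thetaQ q / (q * (2 * Real.cos (Real.pi / q))) : ℝ)
          * (eQ q (j * (d + 1)) + eQ q (j * (d - 1))) := by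
  have hc := cos_piq_pos hq
  have hq0 := qpos hq
  have hre : ((eQ q j).re : ℂ) = (eQ q j + eQ q (-j)) / 2 := by
    rw [eQ_neg, Complex.add_conj]
    push_cast
    ring
  have h1 : eQ q j * eQ q (j * d) = eQ q (j * (d + 1)) := by
    rw [← eQ_add]; ring_nf
  have h2 : eQ q (-j) * eQ q (j * d) = eQ q (j * (d - 1)) := by
    rw [← eQ_add]; ring_nf
  rw [cF]
  push_cast
  rw [hre, ← h1, ← h2]
  field_simp

lemma GQ_eq {q : ℕ} [NeZero q] (hq : 5 ≤ q) (d : ZMod q) :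
    GQ q d = (thetaQ q / q : ℝ) * (if d = 0 then (q : ℂ) else 0)
      + (thetaQ q / (q * (2 * Real.cos (Real.pi / q))) : ℝ)
        * ((if d + 1 = 0 then (q : ℂ) else 0) + (if d - 1 = 0 then (q : ℂ) else 0)) := by
  rw [GQ]
  rw [Finset.sum_congr rfl (fun j _ => cF_term hq j d)]
  rw [Finset.sum_add_distrib, ← Finset.mul_sum, ← Finset.mul_sum, sum_eQ]
  congr 1
  rw [Finset.sum_add_distrib, sum_eQ, sum_eQ]

lemma GQ_zero {q : ℕ} [NeZero q] (hq : 5 ≤ q) : GQ q 0 = (thetaQ q : ℝ) := by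
  have h1 : (1 : ZMod q) ≠ 0 := one_ne_zero_zmod hq
  have hq0 := qpos hq
  rw [GQ_eq hq]
  rw [if_pos rfl, if_neg (by simpa using h1), if_neg (by simpa using (neg_ne_zero.mpr h1 : -(1:ZMod q) ≠ 0))]
  push_cast
  field_simp
  rw [zero_mul, zero_div, add_zero]
  field_simp
  exact mul_div_cancel_right₀ _ (by exact_mod_cast hq0.ne')

lemma GQ_ne {q : ℕ} [NeZero q] (hq : 5 ≤ q) (d : ZMod q)
    (h0 : d ≠ 0) (h1 : d ≠ 1) (h2 : d ≠ -1) : GQ q d = 0 := by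
  rw [GQ_eq hq]
  rw [if_neg h0, if_neg (by intro h; exact h2 (by linear_combination (h : d + 1 = 0))),
    if_neg (by intro h; exact h1 (by linear_combination (h : d - 1 = 0)))]
  simp

lemma indep_bound {q : ℕ} [NeZero q] (hq : 5 ≤ q) (hqo : Odd q) (n : ℕ)
    (S : Finset (Fin n → ZMod q))
    (hS : ∀ s ∈ S, ∀ t ∈ S, s ≠ t →
      ∃ k, s k - t k ≠ 0 ∧ s k - t k ≠ 1 ∧ s k - t k ≠ -1) :
    (S.card : ℝ) ≤ thetaQ q ^ n := by
  classical
  set θ := thetaQ q with hθdef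
  set P : (Fin n → ZMod q) → (Fin n → ZMod q) → ℂ :=
    fun J s => ∏ k, eQ q (J k * s k) with hPdef
  set T : (Fin n → ZMod q) → ℂ := fun J => ∑ s ∈ S, P J s with hTdef
  -- Step A : diagonal evaluation
  have stepA : ∀ s ∈ S, ∀ t ∈ S,
      (∏ k, GQ q (s k - t k)) = if s = t then ((θ ^ n : ℝ) : ℂ) else 0 := by
    intro s hs t ht
    split_ifs with hst
    · subst hst
      have : ∀ k : Fin n, GQ q (s k - s k) = (θ : ℂ) := by
        intro k; rw [sub_self]; exact GQ_zero hq
      rw [Finset.prod_congr rfl (fun k _ => this k), Finset.prod_const, Finset.card_univ,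
        Fintype.card_fin]
      push_cast; ring
    · obtain ⟨k, h0, h1, h2⟩ := hS s hs t ht hst
      exact Finset.prod_eq_zero (Finset.mem_univ k) (GQ_ne hq _ h0 h1 h2)
  -- LHS value
  have hLHS : (∑ s ∈ S, ∑ t ∈ S, ∏ k, GQ q (s k - t k)) = ((θ ^ n * S.card : ℝ) : ℂ) := by
    rw [Finset.sum_congr rfl (fun s hs => Finset.sum_congr rfl (fun t ht => stepA s hs t ht))]
    have : ∀ s ∈ S, (∑ t ∈ S, if s = t then ((θ ^ n : ℝ) : ℂ) else 0) = ((θ ^ n : ℝ) : ℂ) := by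
      intro s hs
      rw [Finset.sum_ite_eq S s (fun _ => ((θ ^ n : ℝ) : ℂ))]
      exact if_pos hs
    rw [Finset.sum_congr rfl this, Finset.sum_const, nsmul_eq_mul]
    push_cast; ring
  -- Step B : Fourier expansion
  have expand : ∀ s t : Fin n → ZMod q,
      (∏ k, GQ q (s k - t k))
        = ∑ J : Fin n → ZMod q, (∏ k, (cF q (J k) : ℂ)) *
            (P J s * (starRingEnd ℂ) (P J t)) := by
    intro s t
    calc (∏ k, GQ q (s k - t k))
        = ∏ k, ∑ j : ZMod q, (cF q j : ℂ) * eQ q (j * (s k - t k)) := rfl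
      _ = ∑ J ∈ Fintype.piFinset (fun _ : Fin n => (Finset.univ : Finset (ZMod q))),
            ∏ k, (cF q (J k) : ℂ) * eQ q (J k * (s k - t k)) := by
          rw [Finset.prod_univ_sum]
      _ = ∑ J : Fin n → ZMod q, ∏ k, (cF q (J k) : ℂ) * eQ q (J k * (s k - t k)) := by
          rw [Fintype.piFinset_univ]
      _ = ∑ J : Fin n → ZMod q, (∏ k, (cF q (J k) : ℂ)) *
            (P J s * (starRingEnd ℂ) (P J t)) := by
          apply Finset.sum_congr rfl
          intro J _
          have hfac : ∀ k : Fin n, (cF q (J k) : ℂ) * eQ q (J k * (s k - t k))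
              = (cF q (J k) : ℂ) * (eQ q (J k * s k) * (starRingEnd ℂ) (eQ q (J k * t k))) := by
            intro k
            rw [← eQ_neg, ← eQ_add]
            congr 2
            ring
          rw [Finset.prod_congr rfl (fun k _ => hfac k), Finset.prod_mul_distrib,
            Finset.prod_mul_distrib, hPdef, map_prod]
  -- Combine into the positive expansion
  have hexp : ((θ ^ n * S.card : ℝ) : ℂ)
      = ∑ J : Fin n → ZMod q, (((∏ k, cF q (J k)) * Complex.normSq (T J) : ℝ) : ℂ) := by
    rw [← hLHS]
    rw [Finset.sum_congr rfl (fun s _ => Finset.sum_congr rfl (fun t _ => expand s t))]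
    rw [Finset.sum_congr rfl (fun (s : Fin n → ZMod q) (_ : s ∈ S) =>
      (Finset.sum_comm (s := S) (t := (Finset.univ : Finset (Fin n → ZMod q)))
        (f := fun t J => (∏ k, (cF q (J k) : ℂ)) * (P J s * (starRingEnd ℂ) (P J t)))))]
    rw [Finset.sum_comm]
    apply Finset.sum_congr rfl
    intro J _
    rw [Finset.sum_comm]
    simp_rw [← Finset.mul_sum]
    have hTT : T J * (starRingEnd ℂ) (T J)
        = ∑ a ∈ S, ∑ b ∈ S, P J b * (starRingEnd ℂ) (P J a) := by
      show (∑ b ∈ S, P J b) * (starRingEnd ℂ) (∑ a ∈ S, P J a) = _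
      rw [map_sum, Finset.sum_mul_sum]
      exact Finset.sum_comm
    rw [← hTT, Complex.mul_conj]
    push_cast
    ring
  have hreal : θ ^ n * S.card
      = ∑ J : Fin n → ZMod q, (∏ k, cF q (J k)) * Complex.normSq (T J) := by
    have := hexp
    rw [← Complex.ofReal_sum] at this
    exact_mod_cast this
  -- lower bound by the J = 0 term
  have hterm0 : (∏ k : Fin n, cF q ((fun _ : Fin n => (0 : ZMod q)) k))
      * Complex.normSq (T (fun _ => 0)) = (S.card : ℝ) ^ 2 := by
    have h1 : (∏ k : Fin n, cF q ((fun _ : Fin n => (0 : ZMod q)) k)) = 1 := by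
      simp [cF_zero hq]
    have h2 : T (fun _ => 0) = (S.card : ℂ) := by
      show (∑ s ∈ S, P (fun _ => 0) s) = (S.card : ℂ)
      have : ∀ s ∈ S, P (fun _ => 0) s = 1 := by
        intro s _
        rw [hPdef]
        simp [eQ_zero]
      rw [Finset.sum_congr rfl this, Finset.sum_const, nsmul_eq_mul, mul_one]
    rw [h1, h2, one_mul]
    rw [Complex.normSq_natCast]
    push_cast; ring
  have hge : (S.card : ℝ) ^ 2 ≤ θ ^ n * S.card := by
    rw [hreal, ← hterm0]
    apply Finset.single_le_sum (f := fun J => (∏ k, cF q (J k)) * Complex.normSq (T J))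
    · intro J _
      apply mul_nonneg
      · exact Finset.prod_nonneg (fun k _ => cF_nonneg hq hqo _)
      · exact Complex.normSq_nonneg _
    · exact Finset.mem_univ _
  rcases Nat.eq_zero_or_pos S.card with h | h
  · rw [h]
    push_cast
    exact pow_nonneg (le_of_lt (thetaQ_pos hq)) n
  · have hpos : (0 : ℝ) < S.card := by exact_mod_cast h
    nlinarith [hge]

lemma two_ne_zero_zmod {q : ℕ} [NeZero q] (hq : 5 ≤ q) : (2 : ZMod q) ≠ 0 := by
  intro h
  have : ((2 : ℕ) : ZMod q) = 0 := by exact_mod_cast h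
  rw [ZMod.natCast_eq_zero_iff] at this
  have := Nat.le_of_dvd two_pos this
  omega

lemma Wx_nonneg {q : ℕ} {ε : ℝ} (hε : 0 < ε) (hε' : ε ≤ 1 / 2) (y x : ZMod q) :
    0 ≤ W q ε y x := by
  rw [W]; split_ifs <;> linarith

lemma Wx_ge {q : ℕ} [NeZero q] (hq : 5 ≤ q) {ε : ℝ} (hε : 0 < ε) (hε' : ε ≤ 1 / 2)
    (x y : ZMod q) (h : y = x ∨ y = x + 1) : ε ≤ W q ε y x := by
  rw [W]
  rcases h with h | h
  · rw [if_pos h]; linarith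
  · by_cases h2 : y = x
    · rw [if_pos h2]; linarith
    · rw [if_neg h2, if_pos h]

lemma sum_Wx {q : ℕ} [NeZero q] (hq : 5 ≤ q) {ε : ℝ} (x : ZMod q) :
    ∑ y : ZMod q, W q ε y x = 1 := by
  have hne : x + 1 ≠ x := by
    intro h
    have : (1 : ZMod q) = 0 := by linear_combination h
    exact one_ne_zero_zmod hq this
  have hsplit : ∀ y : ZMod q, W q ε y x
      = (if y = x then 1 - ε else 0) + (if y = x + 1 then ε else 0) := by
    intro y
    rw [W]
    by_cases h1 : y = x
    · rw [if_pos h1, if_pos h1, if_neg (by rw [h1]; exact fun h => hne h.symm), add_zero]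
    · rw [if_neg h1, if_neg h1, zero_add]
  rw [Finset.sum_congr rfl (fun y _ => hsplit y), Finset.sum_add_distrib,
    Finset.sum_ite_eq' Finset.univ x (fun _ => 1 - ε),
    Finset.sum_ite_eq' Finset.univ (x + 1) (fun _ => ε)]
  simp

lemma sum_Wxn {q : ℕ} [NeZero q] (hq : 5 ≤ q) {ε : ℝ} (n : ℕ) (x : Fin n → ZMod q) :
    ∑ y : Fin n → ZMod q, ∏ k, W q ε (y k) (x k) = 1 := by
  rw [← Fintype.piFinset_univ,
    ← Finset.prod_univ_sum (fun _ : Fin n => (Finset.univ : Finset (ZMod q)))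
      (fun k v => W q ε v (x k))]
  rw [Finset.prod_congr rfl (fun k _ => sum_Wx hq (x k))]
  exact Finset.prod_const_one

lemma Wxn_nonneg {q : ℕ} {ε : ℝ} (hε : 0 < ε) (hε' : ε ≤ 1 / 2) (n : ℕ)
    (y x : Fin n → ZMod q) : 0 ≤ ∏ k, W q ε (y k) (x k) :=
  Finset.prod_nonneg (fun k _ => Wx_nonneg hε hε' _ _)

lemma Wxn_fan {q : ℕ} [NeZero q] (hq : 5 ≤ q) {ε : ℝ} (hε : 0 < ε) (hε' : ε ≤ 1 / 2) (n : ℕ)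
    (y x : Fin n → ZMod q) (h : ∀ k, y k = x k ∨ y k = x k + 1) :
    ε ^ n ≤ ∏ k, W q ε (y k) (x k) := by
  calc ε ^ n = ∏ _k : Fin n, ε := by rw [Finset.prod_const, Finset.card_univ, Fintype.card_fin]
    _ ≤ ∏ k, W q ε (y k) (x k) :=
      Finset.prod_le_prod (fun k _ => le_of_lt hε) (fun k _ => Wx_ge hq hε hε' _ _ (h k))

lemma error_lower {q : ℕ} [NeZero q] (hq : 5 ≤ q) (hqo : Odd q) {ε : ℝ}
    (hε : 0 < ε) (hε' : ε ≤ 1 / 2) (M n : ℕ)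
    (f : Fin M → (Fin n → ZMod q)) (φ : (Fin n → ZMod q) → Fin M) :
    ε ^ n * ((M : ℝ) - thetaQ q ^ n) / M
      ≤ (1 / M) * ∑ m : Fin M, ∑ y : Fin n → ZMod q,
          if φ y = m then 0 else ∏ k, W q ε (y k) ((f m) k) := by
  classical
  rcases Nat.eq_zero_or_pos M with hM0 | hM0
  · subst hM0
    simp
  set good : Finset (Fin M) :=
    Finset.univ.filter
      (fun m => ∀ y : Fin n → ZMod q, (∀ k, y k = f m k ∨ y k = f m k + 1) → φ y = m)
    with hgood
  have hgood_mem : ∀ m : Fin M, m ∈ good ↔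
      (∀ y : Fin n → ZMod q, (∀ k, y k = f m k ∨ y k = f m k + 1) → φ y = m) := by
    intro m
    rw [hgood, Finset.mem_filter]
    simp
  -- each bad message contributes at least ε^n
  have hbad : ∀ m : Fin M, m ∉ good →
      ε ^ n ≤ ∑ y : Fin n → ZMod q, if φ y = m then 0 else ∏ k, W q ε (y k) ((f m) k) := by
    intro m hm
    rw [hgood_mem] at hm
    push_neg at hm
    obtain ⟨y0, hy0fan, hy0ne⟩ := hm
    have h1 : ε ^ n ≤ if φ y0 = m then 0 else ∏ k, W q ε (y0 k) ((f m) k) := by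
      rw [if_neg hy0ne]
      exact Wxn_fan hq hε hε' n y0 (f m) hy0fan
    refine le_trans h1 (Finset.single_le_sum (f := fun y =>
      if φ y = m then 0 else ∏ k, W q ε (y k) ((f m) k)) ?_ (Finset.mem_univ y0))
    intro y _
    split_ifs
    · exact le_refl 0
    · exact Wxn_nonneg hε hε' n y (f m)
  -- nonnegativity of each inner sum
  have hnn : ∀ m : Fin M,
      0 ≤ ∑ y : Fin n → ZMod q, if φ y = m then 0 else ∏ k, W q ε (y k) ((f m) k) := by
    intro m
    apply Finset.sum_nonneg
    intro y _
    split_ifs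
    · exact le_refl 0
    · exact Wxn_nonneg hε hε' n y (f m)
  -- the good set is an independent set via f
  have hinj : Set.InjOn f good := by
    intro a ha b hb hab
    rw [Finset.mem_coe, hgood_mem] at ha hb
    have hfa : φ (f a) = a := ha (f a) (fun k => Or.inl rfl)
    have hfb : φ (f a) = b := hb (f a) (fun k => by rw [hab]; exact Or.inl rfl)
    rw [← hfa, hfb]
  have hindep : ((good.image f).card : ℝ) ≤ thetaQ q ^ n := by
    apply indep_bound hq hqo
    intro s hs t ht hst
    rw [Finset.mem_image] at hs ht
    obtain ⟨a, ha, rfl⟩ := hs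
    obtain ⟨b, hb, rfl⟩ := ht
    by_contra hcon
    push_neg at hcon
    have hdif : ∀ k, f a k - f b k = 0 ∨ f a k - f b k = 1 ∨ f a k - f b k = -1 := by
      intro k
      by_cases h0 : f a k - f b k = 0
      · exact Or.inl h0
      by_cases h1 : f a k - f b k = 1
      · exact Or.inr (Or.inl h1)
      exact Or.inr (Or.inr (hcon k h0 h1))
    set y : Fin n → ZMod q := fun k => if f b k = f a k + 1 then f a k + 1 else f a k with hy
    have hfana : ∀ k, y k = f a k ∨ y k = f a k + 1 := by
      intro k
      by_cases h : f b k = f a k + 1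
      · exact Or.inr (by simp only [hy]; rw [if_pos h])
      · exact Or.inl (by simp only [hy]; rw [if_neg h])
    have hfanb : ∀ k, y k = f b k ∨ y k = f b k + 1 := by
      intro k
      rcases hdif k with h0 | h1 | h2
      · have hba : f b k = f a k := by linear_combination -h0
        have hne : ¬ (f b k = f a k + 1) := by
          rw [hba]
          intro h
          exact one_ne_zero_zmod hq (by linear_combination -h)
        refine Or.inl ?_
        simp only [hy]
        rw [if_neg hne]
        exact hba.symm
      · have hba : f b k = f a k - 1 := by linear_combination -h1
        have hne : ¬ (f b k = f a k + 1) := by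
          rw [hba]
          intro h
          exact two_ne_zero_zmod hq (by linear_combination -h)
        refine Or.inr ?_
        simp only [hy]
        rw [if_neg hne, hba]
        ring
      · have hba : f b k = f a k + 1 := by linear_combination -h2
        refine Or.inl ?_
        simp only [hy]
        rw [if_pos hba]
        exact hba.symm
    rw [hgood_mem] at ha hb
    have h1 : φ y = a := ha y hfana
    have h2 : φ y = b := hb y hfanb
    apply hst
    rw [← h1, h2]
  have hcard : ((good.card : ℝ)) ≤ thetaQ q ^ n := by
    rwa [Finset.card_image_of_injOn hinj] at hindep
  -- add up
  have htotal : ε ^ n * ((M : ℝ) - thetaQ q ^ n)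
      ≤ ∑ m : Fin M, ∑ y : Fin n → ZMod q,
          if φ y = m then 0 else ∏ k, W q ε (y k) ((f m) k) := by
    have h1 : ∑ m ∈ goodᶜ, (ε ^ n)
        ≤ ∑ m ∈ goodᶜ, ∑ y : Fin n → ZMod q,
            if φ y = m then 0 else ∏ k, W q ε (y k) ((f m) k) := by
      apply Finset.sum_le_sum
      intro m hm
      exact hbad m (Finset.mem_compl.mp hm)
    have h2 : ∑ m ∈ goodᶜ, ∑ y : Fin n → ZMod q,
          (if φ y = m then 0 else ∏ k, W q ε (y k) ((f m) k))
        ≤ ∑ m : Fin M, ∑ y : Fin n → ZMod q,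
            if φ y = m then 0 else ∏ k, W q ε (y k) ((f m) k) := by
      apply Finset.sum_le_sum_of_subset_of_nonneg (Finset.subset_univ _)
      intro m _ _
      exact hnn m
    have h3 : (goodᶜ.card : ℝ) * ε ^ n
        ≤ ∑ m : Fin M, ∑ y : Fin n → ZMod q,
            if φ y = m then 0 else ∏ k, W q ε (y k) ((f m) k) := by
      rw [Finset.sum_const, nsmul_eq_mul] at h1
      exact le_trans h1 h2
    have h4 : ((M : ℝ) - thetaQ q ^ n) ≤ (goodᶜ.card : ℝ) := by
      rw [Finset.card_compl, Fintype.card_fin]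
      have h5 : good.card ≤ M := by simpa using Finset.card_le_univ good
      rw [Nat.cast_sub h5]
      linarith [hcard]
    calc ε ^ n * ((M : ℝ) - thetaQ q ^ n) ≤ ε ^ n * (goodᶜ.card : ℝ) := by
          apply mul_le_mul_of_nonneg_left h4 (le_of_lt (pow_pos hε n))
      _ ≤ _ := by rw [mul_comm]; exact h3
  have hMpos : (0 : ℝ) < M := by exact_mod_cast hM0
  rw [div_eq_mul_one_div, mul_comm (ε ^ n * ((M : ℝ) - thetaQ q ^ n)) (1 / (M : ℝ))]
  apply mul_le_mul_of_nonneg_left htotal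
  positivity

lemma PeX_lower {q : ℕ} [NeZero q] (hq : 5 ≤ q) (hqo : Odd q) {ε : ℝ}
    (hε : 0 < ε) (hε' : ε ≤ 1 / 2) (M n : ℕ) (hM : 0 < M) :
    ε ^ n * ((M : ℝ) - thetaQ q ^ n) / M ≤ Pe q ε M n := by
  rw [Pe]
  apply le_csInf
  · exact ⟨_, (fun _ => (fun _ => 0)), (fun _ => ⟨0, hM⟩), rfl⟩
  · rintro p ⟨f, φ, rfl⟩
    exact error_lower hq hqo hε hε' M n f φ

lemma PeX_half {q : ℕ} [NeZero q] (hq : 5 ≤ q) (hqo : Odd q) {ε : ℝ}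
    (hε : 0 < ε) (hε' : ε ≤ 1 / 2) (M n : ℕ) (hM : 2 * thetaQ q ^ n ≤ (M : ℝ)) :
    ε ^ n / 2 ≤ Pe q ε M n := by
  have hθ : (0 : ℝ) < thetaQ q ^ n := pow_pos (thetaQ_pos hq) n
  have hMpos : (0 : ℝ) < M := by linarith
  have hM0 : 0 < M := by exact_mod_cast hMpos
  refine le_trans ?_ (PeX_lower hq hqo hε hε' M n hM0)
  rw [div_le_div_iff₀ two_pos hMpos]
  have hεn : (0 : ℝ) < ε ^ n := pow_pos hε n
  nlinarith [mul_nonneg (le_of_lt hεn) (by linarith : (0:ℝ) ≤ (M : ℝ) - 2 * thetaQ q ^ n)]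

lemma PeX_le_one {q : ℕ} [NeZero q] (hq : 5 ≤ q) {ε : ℝ}
    (hε : 0 < ε) (hε' : ε ≤ 1 / 2) (M n : ℕ) (hM : 0 < M) :
    Pe q ε M n ≤ 1 := by
  have hnn : ∀ (f : Fin M → (Fin n → ZMod q)) (φ : (Fin n → ZMod q) → Fin M),
      (0:ℝ) ≤ (1 / M) * ∑ m : Fin M, ∑ y : Fin n → ZMod q,
        if φ y = m then 0 else ∏ k, W q ε (y k) ((f m) k) := by
    intro f φ
    apply mul_nonneg (by positivity)
    apply Finset.sum_nonneg; intro m _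
    apply Finset.sum_nonneg; intro y _
    split_ifs
    · exact le_refl 0
    · exact Wxn_nonneg hε hε' n y (f m)
  have hub : ∀ (f : Fin M → (Fin n → ZMod q)) (φ : (Fin n → ZMod q) → Fin M),
      (1 / M) * (∑ m : Fin M, ∑ y : Fin n → ZMod q,
        if φ y = m then 0 else ∏ k, W q ε (y k) ((f m) k)) ≤ 1 := by
    intro f φ
    have h1 : ∀ m : Fin M, (∑ y : Fin n → ZMod q,
        if φ y = m then 0 else ∏ k, W q ε (y k) ((f m) k)) ≤ 1 := by
      intro m
      calc (∑ y : Fin n → ZMod q, if φ y = m then 0 else ∏ k, W q ε (y k) ((f m) k))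
          ≤ ∑ y : Fin n → ZMod q, ∏ k, W q ε (y k) ((f m) k) := by
            apply Finset.sum_le_sum
            intro y _
            split_ifs
            · exact Wxn_nonneg hε hε' n y (f m)
            · exact le_refl _
        _ = 1 := sum_Wxn hq n (f m)
    have h2 : (∑ m : Fin M, ∑ y : Fin n → ZMod q,
        if φ y = m then 0 else ∏ k, W q ε (y k) ((f m) k)) ≤ M := by
      calc (∑ m : Fin M, ∑ y : Fin n → ZMod q,
          if φ y = m then 0 else ∏ k, W q ε (y k) ((f m) k))
          ≤ ∑ _m : Fin M, (1:ℝ) := Finset.sum_le_sum (fun m _ => h1 m)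
        _ = M := by simp
    have hMpos : (0:ℝ) < M := by exact_mod_cast hM
    calc (1 / (M:ℝ)) * (∑ m : Fin M, ∑ y : Fin n → ZMod q,
          if φ y = m then 0 else ∏ k, W q ε (y k) ((f m) k))
        ≤ (1 / (M:ℝ)) * M := mul_le_mul_of_nonneg_left h2 (by positivity)
      _ = 1 := by field_simp
  rw [Pe]
  have hmem : ((1 / (M:ℝ)) * ∑ m : Fin M, ∑ y : Fin n → ZMod q,
      if (fun _ : Fin n → ZMod q => (⟨0, hM⟩ : Fin M)) y = m then 0
      else Wn q n ε y ((fun _ : Fin M => (fun _ : Fin n => (0 : ZMod q))) m))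
      ∈ {p : ℝ | ∃ f : Fin M → (Fin n → ZMod q), ∃ φ : (Fin n → ZMod q) → Fin M,
        p = (1 / M) * ∑ m : Fin M, ∑ y : Fin n → ZMod q,
          if φ y = m then 0 else Wn q n ε y (f m)} :=
    ⟨_, _, rfl⟩
  exact le_trans (csInf_le ⟨0, by rintro p ⟨f, φ, rfl⟩; exact hnn f φ⟩ hmem) (hub _ _)

theorem stmt8 (q : ℕ) [NeZero q] (hq : 5 ≤ q) (hqo : Odd q)
    (ε : ℝ) (hε : 0 < ε) (hε' : ε ≤ 1 / 2)
    (R : ℝ)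
    (hR : Real.logb 2 ((q : ℝ) * Real.cos (Real.pi / q) / (1 + Real.cos (Real.pi / q))) < R) :
    EReliability q ε R ≤ Real.logb 2 (1 / ε) := by
  rw [EReliability]
  have hθpos := thetaQ_pos hq
  set L := Real.logb 2 (1 / ε) with hL
  have hRθ : Real.logb 2 (thetaQ q) < R := hR
  have hθR : thetaQ q < (2 : ℝ) ^ R := by
    have h1 : (2 : ℝ) ^ Real.logb 2 (thetaQ q) = thetaQ q :=
      Real.rpow_logb (by norm_num) (by norm_num) hθpos
    calc thetaQ q = (2 : ℝ) ^ Real.logb 2 (thetaQ q) := h1.symm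
      _ < (2 : ℝ) ^ R := (Real.rpow_lt_rpow_left_iff (by norm_num : (1:ℝ) < 2)).mpr hRθ
  have h2Rpos : (0 : ℝ) < (2 : ℝ) ^ R := Real.rpow_pos_of_pos (by norm_num) R
  have hr0 : 0 ≤ thetaQ q / (2 : ℝ) ^ R := div_nonneg hθpos.le h2Rpos.le
  have hr1 : thetaQ q / (2 : ℝ) ^ R < 1 := (div_lt_one h2Rpos).mpr hθR
  have hev1 : ∀ᶠ n : ℕ in Filter.atTop, (thetaQ q / (2 : ℝ) ^ R) ^ n < 1 / 2 :=
    (tendsto_pow_atTop_nhds_zero_of_lt_one hr0 hr1).eventually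
      (gt_mem_nhds (by norm_num : (0:ℝ) < 1/2))
  have hevA : ∀ᶠ n : ℕ in Filter.atTop,
      0 ≤ (1 / (n : ℝ)) * Real.logb 2 (1 / Pe q ε (⌈(2 : ℝ) ^ ((n : ℝ) * R)⌉₊) n)
      ∧ (1 / (n : ℝ)) * Real.logb 2 (1 / Pe q ε (⌈(2 : ℝ) ^ ((n : ℝ) * R)⌉₊) n)
        ≤ L + 1 / (n : ℝ) := by
    filter_upwards [hev1, Filter.eventually_ge_atTop 1] with n hrn hn1
    set M := ⌈(2 : ℝ) ^ ((n : ℝ) * R)⌉₊ with hM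
    have h2R : (2 : ℝ) ^ ((n : ℝ) * R) = ((2 : ℝ) ^ R) ^ n := by
      rw [mul_comm, Real.rpow_mul (by norm_num : (0:ℝ) ≤ 2), Real.rpow_natCast]
    have hMge : ((2 : ℝ) ^ R) ^ n ≤ (M : ℝ) := by
      rw [hM, ← h2R]; exact Nat.le_ceil _
    have hsplit : thetaQ q ^ n = (thetaQ q / (2:ℝ)^R) ^ n * ((2:ℝ)^R) ^ n := by
      rw [← mul_pow, div_mul_cancel₀ _ (ne_of_gt h2Rpos)]
    have h2M : 2 * thetaQ q ^ n ≤ (M : ℝ) := by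
      have hp : (0:ℝ) ≤ ((2:ℝ)^R) ^ n := le_of_lt (pow_pos h2Rpos n)
      have := mul_le_mul_of_nonneg_right (le_of_lt hrn) hp
      rw [← hsplit] at this
      linarith
    have hPe : ε ^ n / 2 ≤ Pe q ε M n := PeX_half hq hqo hε hε' M n h2M
    have hPepos : 0 < Pe q ε M n := lt_of_lt_of_le (by positivity) hPe
    have hlog : Real.logb 2 (1 / Pe q ε M n) ≤ 1 + n * L := by
      have h1 : 1 / Pe q ε M n ≤ 2 / ε ^ n := by
        calc 1 / Pe q ε M n ≤ 1 / (ε ^ n / 2) :=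
            one_div_le_one_div_of_le (by positivity) hPe
          _ = 2 / ε ^ n := one_div_div _ _
      calc Real.logb 2 (1 / Pe q ε M n) ≤ Real.logb 2 (2 / ε ^ n) :=
          Real.logb_le_logb_of_le (by norm_num : (1:ℝ) < 2) (by positivity) h1
        _ = 1 + n * L := by
          rw [show (2:ℝ) / ε ^ n = 2 * (1/ε) ^ n by rw [one_div_pow]; ring]
          rw [Real.logb_mul (by norm_num) (by positivity), Real.logb_pow,
            Real.logb_self_eq_one (by norm_num : (1:ℝ) < 2), hL]
    have hn0 : (0:ℝ) < (n : ℝ) := by exact_mod_cast hn1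
    constructor
    · have hM0 : 0 < M := by
        have hMR : (0:ℝ) < (M:ℝ) := by
          have := pow_pos hθpos n
          linarith
        exact_mod_cast hMR
      have hPle1 := PeX_le_one hq hε hε' M n hM0
      have hlog0 : 0 ≤ Real.logb 2 (1 / Pe q ε M n) :=
        Real.logb_nonneg (by norm_num) (one_le_one_div hPepos hPle1)
      exact mul_nonneg (by positivity) hlog0
    calc (1 / (n : ℝ)) * Real.logb 2 (1 / Pe q ε M n)
        ≤ (1 / (n : ℝ)) * (1 + n * L) := by
          apply mul_le_mul_of_nonneg_left hlog (by positivity)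
      _ = L + 1 / (n : ℝ) := by field_simp; ring
  have hev : ∀ᶠ n : ℕ in Filter.atTop,
      (1 / (n : ℝ)) * Real.logb 2 (1 / Pe q ε (⌈(2 : ℝ) ^ ((n : ℝ) * R)⌉₊) n)
        ≤ L + 1 / (n : ℝ) := hevA.mono (fun n h => h.2)
  have hev0 : ∀ᶠ n : ℕ in Filter.atTop,
      (0:ℝ) ≤ (1 / (n : ℝ)) * Real.logb 2 (1 / Pe q ε (⌈(2 : ℝ) ^ ((n : ℝ) * R)⌉₊) n) :=
    hevA.mono (fun n h => h.1)
  have hevc : ∀ᶠ n : ℕ in Filter.atTop,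
      (1 / (n : ℝ)) * Real.logb 2 (1 / Pe q ε (⌈(2 : ℝ) ^ ((n : ℝ) * R)⌉₊) n) ≤ L + 1 := by
    filter_upwards [hev, Filter.eventually_ge_atTop 1] with n h1 h2
    have hn0 : (1:ℝ) ≤ (n : ℝ) := by exact_mod_cast h2
    have : 1 / (n:ℝ) ≤ 1 := by
      rw [div_le_one (by linarith)]; linarith
    linarith
  have hlim : Filter.Tendsto (fun n : ℕ => L + 1 / (n : ℝ)) Filter.atTop (nhds L) := by
    have h0 := tendsto_one_div_atTop_nhds_zero_nat (𝕜 := ℝ)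
    have := Filter.Tendsto.add (tendsto_const_nhds (x := L) (f := Filter.atTop)) h0
    simpa using this
  calc Filter.limsup (fun n : ℕ =>
        (1 / (n : ℝ)) * Real.logb 2 (1 / Pe q ε (⌈(2 : ℝ) ^ ((n : ℝ) * R)⌉₊) n)) Filter.atTop
      ≤ Filter.limsup (fun n : ℕ => L + 1 / (n : ℝ)) Filter.atTop := by
        refine Filter.limsup_le_limsup hev
          (Filter.isCoboundedUnder_le_of_eventually_le Filter.atTop hev0) ?_
        apply Filter.isBoundedUnder_of_eventually_le (a := L + 1)
        filter_upwards [Filter.eventually_ge_atTop 1] with n h2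
        have hn0 : (1:ℝ) ≤ (n : ℝ) := by exact_mod_cast h2
        have : 1 / (n:ℝ) ≤ 1 := by
          rw [div_le_one (by linarith)]; linarith
        linarith
    _ = L := hlim.limsup_eq
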